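/- arXiv:2006.00502 — 2 statements merged into one kernel-verified Lean document; each statement's English description precedes it below -/
import Mathlib

section
/- Discrete Gronwall lemma: Let k, B ≥ 0 and let (aₙ), (bₙ), (cₙ), (γₙ) be sequences of nonnegative reals such that for all n ≥ 0, aₙ + k·∑_{μ=0}^{n} bμ ≤ k·∑_{μ=0}^{n} γμ aμ + k·∑_{μ=0}^{n} cμ + B. Suppose kγμ < 1 for all μ and set σμ = (1 − kγμ)⁻¹. Then for all n ≥ 0, aₙ + k·∑_{μ=0}^{n} bμ ≤ exp(k·∑_{μ=0}^{n} σμ γμ) · (k·∑_{μ=0}^{n} cμ + B). -/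
namespace Gronwall

open Finset in
/-- Discrete Gronwall lemma. -/
theorem discrete_gronwall
    (k B : ℝ) (a b c γ σ : ℕ → ℝ)
    (hk : 0 ≤ k) (hB : 0 ≤ B)
    (ha : ∀ n, 0 ≤ a n) (hb : ∀ n, 0 ≤ b n) (hc : ∀ n, 0 ≤ c n)
    (hγ : ∀ n, 0 ≤ γ n)
    (hkγ : ∀ μ, k * γ μ < 1)
    (hσ : ∀ μ, σ μ = (1 - k * γ μ)⁻¹)
    (H : ∀ n, a n + k * ∑ μ ∈ range (n + 1), b μ ≤
      k * ∑ μ ∈ range (n + 1), γ μ * a μ + k * ∑ μ ∈ range (n + 1), c μ + B) :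
    ∀ n, a n + k * ∑ μ ∈ range (n + 1), b μ ≤
      Real.exp (k * ∑ μ ∈ range (n + 1), σ μ * γ μ) *
        (k * ∑ μ ∈ range (n + 1), c μ + B) := by
  have hpos : ∀ μ, 0 < 1 - k * γ μ := fun μ => by linarith [hkγ μ]
  have hσpos : ∀ μ, 0 < σ μ := fun μ => by rw [hσ μ]; exact inv_pos.mpr (hpos μ)
  set T : ℕ → ℝ := fun n => k * ∑ μ ∈ range n, σ μ * γ μ with hT
  have hkey : ∀ n, Real.exp (T n) ≤ (1 - k * γ n) * Real.exp (T (n + 1)) := by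
    intro n
    have h1 : T (n + 1) = T n + k * (σ n * γ n) := by
      simp [hT, sum_range_succ, mul_add]
    rw [h1, Real.exp_add]
    have h2 : k * (σ n * γ n) + 1 ≤ Real.exp (k * (σ n * γ n)) :=
      Real.add_one_le_exp _
    have hσ1 : σ n * (1 - k * γ n) = 1 := by
      rw [hσ n]; exact inv_mul_cancel₀ (hpos n).ne'
    have h3 : (1 - k * γ n) * (1 + k * (σ n * γ n)) = 1 := by
      linear_combination (k * γ n) * hσ1
    have h4 : 1 ≤ (1 - k * γ n) * Real.exp (k * (σ n * γ n)) := by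
      nlinarith [hpos n]
    nlinarith [mul_le_mul_of_nonneg_left h4 (Real.exp_pos (T n)).le]
  have hE : ∀ n, 1 + k * ∑ μ ∈ range n, γ μ * Real.exp (T (μ + 1)) ≤
      Real.exp (T n) := by
    intro n
    induction n with
    | zero => simp [hT]
    | succ n ih =>
      rw [sum_range_succ, mul_add]
      have h4 := hkey n
      have h5 : (0:ℝ) < Real.exp (T (n + 1)) := Real.exp_pos _
      nlinarith [mul_nonneg hk (mul_nonneg (hγ n) h5.le)]
  intro n
  induction n using Nat.strong_induction_on with
  | _ n ih =>
    have hCnn : 0 ≤ k * ∑ μ ∈ range (n + 1), c μ + B := by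
      have : 0 ≤ ∑ μ ∈ range (n + 1), c μ := sum_nonneg fun μ _ => hc μ
      nlinarith
    set C : ℝ := k * ∑ μ ∈ range (n + 1), c μ + B with hC
    have ham : ∀ m < n, a m ≤ Real.exp (T (m + 1)) * C := by
      intro m hm
      have h6 := ih m hm
      have h7 : k * ∑ μ ∈ range (m + 1), c μ + B ≤ C := by
        rw [hC]
        have : ∑ μ ∈ range (m + 1), c μ ≤ ∑ μ ∈ range (n + 1), c μ :=
          sum_le_sum_of_subset_of_nonneg
            (range_subset_range.mpr (by omega)) (fun μ _ _ => hc μ)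
        nlinarith
      have h8 : 0 ≤ k * ∑ μ ∈ range (m + 1), b μ :=
        mul_nonneg hk (sum_nonneg fun μ _ => hb μ)
      have h9 : Real.exp (T (m + 1)) * (k * ∑ μ ∈ range (m + 1), c μ + B) ≤
          Real.exp (T (m + 1)) * C :=
        mul_le_mul_of_nonneg_left h7 (Real.exp_pos _).le
      calc a m ≤ a m + k * ∑ μ ∈ range (m + 1), b μ := by linarith
        _ ≤ _ := h6.trans h9
    have hγa : ∑ μ ∈ range n, γ μ * a μ ≤
        (∑ μ ∈ range n, γ μ * Real.exp (T (μ + 1))) * C := by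
      rw [sum_mul]
      refine sum_le_sum fun μ hμ => ?_
      rw [mul_assoc]
      exact mul_le_mul_of_nonneg_left (ham μ (mem_range.mp hμ)) (hγ μ)
    set L : ℝ := a n + k * ∑ μ ∈ range (n + 1), b μ with hL
    have hLa : a n ≤ L := by
      have : 0 ≤ k * ∑ μ ∈ range (n + 1), b μ :=
        mul_nonneg hk (sum_nonneg fun μ _ => hb μ)
      linarith
    have hH : L ≤ k * ∑ μ ∈ range n, γ μ * a μ + k * (γ n * a n) + C := by
      have := H n
      rw [sum_range_succ (f := fun μ => γ μ * a μ)] at this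
      rw [hL, hC]; linarith
    have hkγn : 0 ≤ k * γ n := by nlinarith [hγ n, hσpos n]
    have step1 : (1 - k * γ n) * L ≤ k * ∑ μ ∈ range n, γ μ * a μ + C := by
      nlinarith
    have step2 : k * ∑ μ ∈ range n, γ μ * a μ + C ≤ Real.exp (T n) * C := by
      have hE' := hE n
      have hsum : k * ∑ μ ∈ range n, γ μ * a μ ≤
          k * ((∑ μ ∈ range n, γ μ * Real.exp (T (μ + 1))) * C) :=
        mul_le_mul_of_nonneg_left hγa hk
      nlinarith
    have step3 : Real.exp (T n) * C ≤ (1 - k * γ n) * (Real.exp (T (n + 1)) * C) := by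
      have := hkey n
      nlinarith
    have hfinal : (1 - k * γ n) * L ≤ (1 - k * γ n) * (Real.exp (T (n + 1)) * C) := by
      linarith
    have := (mul_le_mul_iff_of_pos_left (hpos n)).mp hfinal
    simpa [hT, hL, hC] using this
end Gronwall
end

section
/- Error estimate for the Stokes projection: Under the discrete inf-sup condition, the Stokes projection ũ of (u,p) satisfies (ν+h)‖∇(u − ũ)‖² ≤ C[(ν+h) · inf_{v^h ∈ V^h} ‖∇(u − v^h)‖² + (ν+h)⁻¹ · inf_{q^h ∈ Q^h} ‖p − q^h‖²], with C independent of h and ν. -/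
open RealInnerProductSpace

private lemma infi_aux {ι : Sort*} [Nonempty ι] (f : ι → ℝ)
    (x y c : ℝ) (hc : 0 < c) (H : ∀ i, x ≤ c * f i + y) :
    x ≤ c * (⨅ i, f i) + y := by
  have h1 : (x - y) / c ≤ ⨅ i, f i := by
    refine le_ciInf fun i => ?_
    rw [div_le_iff₀ hc]
    nlinarith [H i]
  rw [div_le_iff₀ hc] at h1
  nlinarith

private lemma young_aux (s a b c k : ℝ) (hs : 0 < s) (ha : 0 ≤ a) (hb : 0 ≤ b)
    (hc : 0 ≤ c) (hk : 0 ≤ k) (hk1 : 1 ≤ k ^ 2)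
    (hmain : s * a ^ 2 ≤ s * (a * b) + c * (k * (b + a))) :
    s * a ^ 2 ≤ 3 * k ^ 2 * s * b ^ 2 + 3 * k ^ 2 * s⁻¹ * c ^ 2 := by
  rw [← mul_le_mul_iff_right₀ hs]
  have hrw : s * (3 * k ^ 2 * s * b ^ 2 + 3 * k ^ 2 * s⁻¹ * c ^ 2)
      = 3 * k ^ 2 * (s * s * b ^ 2) + 3 * k ^ 2 * c ^ 2 := by
    field_simp
  rw [hrw]
  nlinarith [mul_le_mul_of_nonneg_left hmain hs.le,
    sq_nonneg (s * a - 2 * s * b), sq_nonneg (s * a - 2 * k * c),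
    sq_nonneg (s * b - k * c),
    mul_nonneg (sub_nonneg.2 hk1) (sq_nonneg (s * b))]

/-- Error estimate for the modified Stokes projection under the discrete
inf-sup condition.  Setting as in the stability statement: `X` carries the
gradient inner product (so `‖v‖ = ‖∇v‖`), `dvg` is the divergence with
`‖∇·v‖² ≤ d‖∇v‖²`, `V^h = {v ∈ X^h : (q^h, ∇·v) = 0 ∀ q^h ∈ Q^h}`, and the
inf-sup constant `β^h > 0`.  There is a constant `C`, independent of `h`
and `ν` (i.e. uniform over all `ν, h > 0` and Stokes projections `ut`), with
`(ν+h)‖∇(u-ut)‖² ≤ C[(ν+h) inf_{v^h∈V^h}‖∇(u-v^h)‖²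
  + (ν+h)⁻¹ inf_{q^h∈Q^h}‖p-q^h‖²]`. -/
theorem stokes_projection_error
    {X Q : Type*} [NormedAddCommGroup X] [InnerProductSpace ℝ X]
    [NormedAddCommGroup Q] [InnerProductSpace ℝ Q]
    (d : ℕ) (hd : d = 2 ∨ d = 3)
    (dvg : X →ₗ[ℝ] Q)
    (hdiv : ∀ v : X, ‖dvg v‖ ^ 2 ≤ (d : ℝ) * ‖v‖ ^ 2)
    (Xh : Submodule ℝ X) (Qh : Submodule ℝ Q)
    (Vh : Submodule ℝ X)
    (hVh : ∀ v : X, v ∈ Vh ↔ v ∈ Xh ∧ ∀ qh ∈ Qh, ⟪(qh : Q), dvg v⟫ = 0)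
    (β : ℝ) (hβ : 0 < β)
    (hinfsup : ∀ qh ∈ Qh, qh ≠ 0 → ∃ vh ∈ Xh, vh ≠ 0 ∧
      β * ‖vh‖ * ‖qh‖ ≤ ⟪qh, dvg vh⟫) :
    ∃ C : ℝ, 0 < C ∧
      ∀ (ν h : ℝ), 0 < ν → 0 < h → ∀ (u ut : X) (p : Q), ut ∈ Vh →
        (∀ vh ∈ Vh, ∀ qh ∈ Qh,
          (ν + h) * ⟪u - ut, vh⟫ - ⟪p - qh, dvg vh⟫ = 0) →
        (ν + h) * ‖u - ut‖ ^ 2 ≤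
          C * ((ν + h) * (⨅ vh : Vh, ‖u - (vh : X)‖ ^ 2) +
            (ν + h)⁻¹ * ⨅ qh : Qh, ‖p - (qh : Q)‖ ^ 2) := by
  have hd1 : (1 : ℝ) ≤ (d : ℝ) := by rcases hd with rfl | rfl <;> norm_num
  refine ⟨3 * d, by positivity, ?_⟩
  intro ν h hν hh u ut p hut herr
  set s : ℝ := ν + h with hs
  have hs0 : 0 < s := by positivity
  have hsinv : 0 < s⁻¹ := by positivity
  set a : ℝ := ‖u - ut‖ with ha
  have ha0 : 0 ≤ a := norm_nonneg _
  obtain ⟨k, hk0, hk2⟩ : ∃ k : ℝ, 0 ≤ k ∧ k ^ 2 = (d : ℝ) :=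
    ⟨Real.sqrt d, Real.sqrt_nonneg _, Real.sq_sqrt (by positivity)⟩
  -- pointwise estimate
  have key : ∀ vh : Vh, ∀ qh : Qh,
      s * a ^ 2 ≤ 3 * d * s * ‖u - (vh : X)‖ ^ 2
        + 3 * d * s⁻¹ * ‖p - (qh : Q)‖ ^ 2 := by
    intro vh qh
    set b : ℝ := ‖u - (vh : X)‖ with hb
    set c : ℝ := ‖p - (qh : Q)‖ with hc
    have hb0 : 0 ≤ b := norm_nonneg _
    have hc0 : 0 ≤ c := norm_nonneg _
    set w : X := (vh : X) - ut with hw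
    have hwmem : w ∈ Vh := Vh.sub_mem vh.2 hut
    have h1 := herr w hwmem (qh : Q) qh.2
    have hsplit : (u - (vh : X)) + w = u - ut := by rw [hw]; abel
    have hinner : ⟪u - ut, u - ut⟫ = ⟪u - ut, u - (vh : X)⟫ + ⟪u - ut, w⟫ := by
      rw [← hsplit, inner_add_right]
    have hself : ⟪u - ut, u - ut⟫ = a ^ 2 := real_inner_self_eq_norm_sq _
    have i1 : ⟪u - ut, u - (vh : X)⟫ ≤ a * b := real_inner_le_norm _ _
    have i2 : ⟪p - (qh : Q), dvg w⟫ ≤ c * ‖dvg w‖ := real_inner_le_norm _ _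
    have idn : ‖dvg w‖ ≤ k * ‖w‖ := by
      have h2' : ‖dvg w‖ ^ 2 ≤ (k * ‖w‖) ^ 2 := by rw [mul_pow, hk2]; exact hdiv w
      calc ‖dvg w‖ = Real.sqrt (‖dvg w‖ ^ 2) := (Real.sqrt_sq (norm_nonneg _)).symm
        _ ≤ Real.sqrt ((k * ‖w‖) ^ 2) := Real.sqrt_le_sqrt h2'
        _ = k * ‖w‖ := Real.sqrt_sq (by positivity)
    have iw : ‖w‖ ≤ b + a := by
      have : w = ((vh : X) - u) + (u - ut) := by rw [hw]; abel
      calc ‖w‖ ≤ ‖(vh : X) - u‖ + ‖u - ut‖ := by rw [this]; exact norm_add_le _ _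
        _ = b + a := by rw [norm_sub_rev]
    have idw : ‖dvg w‖ ≤ k * (b + a) := idn.trans (by nlinarith)
    -- main bound: s * a^2 ≤ s*a*b + c*(k*(b+a))
    have hmain : s * a ^ 2 ≤ s * (a * b) + c * (k * (b + a)) := by
      have : s * a ^ 2 = s * ⟪u - ut, u - (vh : X)⟫ + ⟪p - (qh : Q), dvg w⟫ := by
        rw [← hself, hinner]; linarith [h1]
      rw [this]
      have hdw0 : 0 ≤ ‖dvg w‖ := norm_nonneg _
      nlinarith [mul_le_mul_of_nonneg_left i1 hs0.le,
        mul_le_mul_of_nonneg_left idw hc0]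
    have hk1 : (1 : ℝ) ≤ k ^ 2 := by rw [hk2]; exact hd1
    rw [show ((d : ℝ)) = k ^ 2 from hk2.symm]
    exact young_aux s a b c k hs0 ha0 hb0 hc0 hk0 hk1 hmain
  have hVne : Nonempty Vh := ⟨⟨ut, hut⟩⟩
  have hQne : Nonempty Qh := ⟨⟨0, Qh.zero_mem⟩⟩
  have hC0 : (0 : ℝ) < 3 * d := by positivity
  have step1 : ∀ qh : Qh,
      s * a ^ 2 ≤ 3 * d * s * (⨅ vh : Vh, ‖u - (vh : X)‖ ^ 2)
        + 3 * d * s⁻¹ * ‖p - (qh : Q)‖ ^ 2 := by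
    intro qh
    exact infi_aux (fun vh : Vh => ‖u - (vh : X)‖ ^ 2) _ _ _ (by positivity)
      (fun vh => key vh qh)
  have step2 : s * a ^ 2 ≤ 3 * d * s⁻¹ * (⨅ qh : Qh, ‖p - (qh : Q)‖ ^ 2)
      + 3 * d * s * (⨅ vh : Vh, ‖u - (vh : X)‖ ^ 2) := by
    exact infi_aux (fun qh : Qh => ‖p - (qh : Q)‖ ^ 2) _ _ _ (by positivity)
      (fun qh => by linarith [step1 qh])
  have hring : (3 * (d : ℝ)) * (s * (⨅ vh : Vh, ‖u - (vh : X)‖ ^ 2)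
      + s⁻¹ * ⨅ qh : Qh, ‖p - (qh : Q)‖ ^ 2)
    = 3 * d * s⁻¹ * (⨅ qh : Qh, ‖p - (qh : Q)‖ ^ 2)
      + 3 * d * s * (⨅ vh : Vh, ‖u - (vh : X)‖ ^ 2) := by ring
  linarith [step2, hring.ge, hring.le]
end
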